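/- The 3-dimensional hypercube graph Q_3 admits a proper 4-coloring in which each color class consists of a pair of antipodal vertices, and in this coloring every vertex is adjacent to vertices of all three other colors. Consequently, no single vertex of Q_3 can have its color changed to produce another proper 4-coloring. -/

import Mathlib

/-- The 3-cube graph: vertices `{0,1}^3`, adjacent iff they differ in exactly one
coordinate. -/
def Q3 : SimpleGraph (Fin 3 → Bool) where
  Adj x y := ∃! i, x i ≠ y i
  symm := ⟨by rintro x y ⟨i, hi, hu⟩; exact ⟨i, hi.symm, fun j hj => hu j hj.symm⟩⟩
  loopless := ⟨by rintro x ⟨i, hi, _⟩; exact hi rfl⟩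

def cQ3 : (Fin 3 → Bool) → Fin 4 := fun x =>
  (bif x 0 != x 2 then 2 else 0) + (bif x 1 != x 2 then 1 else 0)

instance : DecidableRel Q3.Adj :=
  fun x y => decidable_of_iff (∃ i, (x i ≠ y i) ∧ ∀ j, (x j ≠ y j) → j = i) Iff.rfl

/-- `Q_3` has a proper 4-coloring whose color classes are the antipodal pairs; in it
every vertex sees all three other colors, so no proper 4-coloring differs from it
on exactly one vertex. -/
theorem Q3_antipodal_coloring :
    ∃ c : (Fin 3 → Bool) → Fin 4,
      (∀ x y, Q3.Adj x y → c x ≠ c y) ∧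
      (∀ x, c x = c (fun i => !x i)) ∧
      (∀ x y, c x = c y → y = x ∨ y = fun i => !x i) ∧
      (∀ x (k : Fin 4), k ≠ c x → ∃ y, Q3.Adj x y ∧ c y = k) ∧
      (∀ d : (Fin 3 → Bool) → Fin 4,
        (∀ x y, Q3.Adj x y → d x ≠ d y) → ¬ ∃! x, d x ≠ c x) := by
  have h1 : ∀ x y, Q3.Adj x y → cQ3 x ≠ cQ3 y := by decide
  have h2 : ∀ x, cQ3 x = cQ3 (fun i => !x i) := by decide
  have h3 : ∀ x y, cQ3 x = cQ3 y → y = x ∨ y = fun i => !x i := by decide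
  have h4 : ∀ x (k : Fin 4), k ≠ cQ3 x → ∃ y, Q3.Adj x y ∧ cQ3 y = k := by decide
  refine ⟨cQ3, h1, h2, h3, h4, ?_⟩
  rintro d hd ⟨x, hx, hu⟩
  obtain ⟨y, hadj, hcy⟩ := h4 x (d x) hx
  have hyx : y ≠ x := fun h => Q3.loopless.irrefl x (h ▸ hadj)
  have hdy : d y = cQ3 y := by
    by_contra h
    exact hyx (hu y h)
  exact hd x y hadj (by rw [hdy, hcy])
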